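/- Let x, y, x', y', u, v : List α. Then u and v are conjugate if and only if there exist a constant C : ℕ and an infinite set I ⊆ ℕ such that for every k ∈ I, d_lcs (x ++ u^k ++ y) (x' ++ v^k ++ y') ≤ C. (Proposition on conjugacy for the longest-common-subsequence edit distance.) -/

import Mathlib

/-- `wpow u k` is the k-fold concatenation `u ++ u ++ ⋯ ++ u` (k copies). -/
def wpow {α : Type*} (u : List α) (k : ℕ) : List α := (List.replicate k u).flatten

/-- `Levenshtein.Cost`, `Levenshtein.impl`, `suffixLevenshtein` and `levenshtein`, as in
Mathlib (`Mathlib/Data/List/EditDistance/Defs.lean`, December 2024), which no longer has them. -/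
structure Levenshtein.Cost (α β δ : Type*) where
  delete : α → δ
  insert : β → δ
  substitute : α → β → δ

def Levenshtein.impl {α β δ : Type*} [AddZeroClass δ] [Min δ] (C : Levenshtein.Cost α β δ)
    (xs : List α) (y : β) (d : {r : List δ // 0 < r.length}) :
    {r : List δ // 0 < r.length} :=
  let ⟨ds, w⟩ := d
  xs.zip (ds.zip ds.tail) |>.foldr
    (init := ⟨[C.insert y + ds.getLast (List.length_pos_iff.mp w)], by simp⟩)
    (fun ⟨x, d₀, d₁⟩ ⟨r, w⟩ =>
      ⟨min (C.delete x + r[0]) (min (C.insert y + d₀) (C.substitute x y + d₁)) :: r, by simp⟩)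

def suffixLevenshtein {α β δ : Type*} [AddZeroClass δ] [Min δ] (C : Levenshtein.Cost α β δ)
    (xs : List α) (ys : List β) : {r : List δ // 0 < r.length} :=
  ys.foldr
    (Levenshtein.impl C xs)
    (xs.foldr (init := ⟨[0], by simp⟩) (fun a ⟨r, w⟩ => ⟨(C.delete a + r[0]) :: r, by simp⟩))

def levenshtein {α β δ : Type*} [AddZeroClass δ] [Min δ] (C : Levenshtein.Cost α β δ)
    (xs : List α) (ys : List β) : δ :=
  let ⟨r, w⟩ := suffixLevenshtein C xs ys
  r[0]

/-- Cost structure for the longest-common-subsequence edit distance: insertions and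
deletions cost 1, substituting `a` by `b` costs 0 if `a = b` and 2 otherwise. -/
def lcsCost {α : Type*} [DecidableEq α] : Levenshtein.Cost α α ℕ where
  delete _ := 1
  insert _ := 1
  substitute a b := if a = b then 0 else 2

namespace Levenshtein

theorem impl_cons {α β δ : Type*} [AddZeroClass δ] [Min δ] {C : Levenshtein.Cost α β δ}
    {x : α} {xs : List α} {y : β} {d : δ} {ds : List δ} {w} (w' : 0 < List.length ds) :
    impl C (x :: xs) y ⟨d :: ds, w⟩ =
      let ⟨r, w⟩ := impl C xs y ⟨ds, w'⟩
      ⟨min (C.delete x + r[0]) (min (C.insert y + d) (C.substitute x y + ds[0])) :: r, by simp⟩ :=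
  match ds, w' with | _ :: _, _ => rfl

theorem impl_cons_fst_zero {α β δ : Type*} [AddZeroClass δ] [Min δ] {C : Levenshtein.Cost α β δ}
    {x : α} {xs : List α} {y : β} {d : δ} {ds : List δ} {w} (h) (w' : 0 < List.length ds) :
    (impl C (x :: xs) y ⟨d :: ds, w⟩).1[0]'h =
      let ⟨r, w⟩ := impl C xs y ⟨ds, w'⟩
      min (C.delete x + r[0]) (min (C.insert y + d) (C.substitute x y + ds[0])) :=
  match ds, w' with | _ :: _, _ => rfl

theorem impl_length {α β δ : Type*} [AddZeroClass δ] [Min δ] {C : Levenshtein.Cost α β δ}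
    {xs : List α} {y : β} (d : {r : List δ // 0 < r.length}) (w : d.1.length = xs.length + 1) :
    (impl C xs y d).1.length = xs.length + 1 := by
  induction xs generalizing d with
  | nil => rfl
  | cons x xs ih =>
    dsimp [impl]
    match d, w with
    | ⟨d₁ :: d₂ :: ds, _⟩, w =>
      dsimp
      congr 1
      exact ih ⟨d₂ :: ds, (by simp)⟩ (by simpa using w)

end Levenshtein

section LevLemmas
open Levenshtein
variable {α β δ : Type*} [AddZeroClass δ] [Min δ] (C : Levenshtein.Cost α β δ)

theorem suffixLevenshtein_length (xs : List α) (ys : List β) :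
    (suffixLevenshtein C xs ys).1.length = xs.length + 1 := by
  induction ys with
  | nil =>
    dsimp [suffixLevenshtein]
    induction xs with
    | nil => rfl
    | cons _ xs ih =>
      simp_all
  | cons y ys ih =>
    dsimp [suffixLevenshtein]
    rw [impl_length]
    exact ih

theorem suffixLevenshtein_cons₂ (xs : List α) (y ys) :
    suffixLevenshtein C xs (y :: ys) = (impl C xs) y (suffixLevenshtein C xs ys) := rfl

theorem suffixLevenshtein_cons₁_aux {x y : {r : List δ // 0 < r.length}}
    (w₀ : x.1[0]'x.2 = y.1[0]'y.2) (w : x.1.tail = y.1.tail) : x = y := by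
  match x, y with
  | ⟨hx :: tx, _⟩, ⟨hy :: ty, _⟩ => simp_all

theorem suffixLevenshtein_cons₁ (x : α) (xs ys) :
    suffixLevenshtein C (x :: xs) ys =
      ⟨levenshtein C (x :: xs) ys ::
        (suffixLevenshtein C xs ys).1, by simp⟩ := by
  induction ys with
  | nil => rfl
  | cons y ys ih =>
    apply suffixLevenshtein_cons₁_aux
    · rfl
    · rw [suffixLevenshtein_cons₂ (xs := x :: xs), ih, impl_cons]
      · rfl
      · simp [suffixLevenshtein_length]

theorem suffixLevenshtein_cons_cons_fst_get_zero (x : α) (xs y ys) (w) :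
    (suffixLevenshtein C (x :: xs) (y :: ys)).1[0]'w =
      let ⟨dx, _⟩ := suffixLevenshtein C xs (y :: ys)
      let ⟨dy, _⟩ := suffixLevenshtein C (x :: xs) ys
      let ⟨dxy, _⟩ := suffixLevenshtein C xs ys
      min
        (C.delete x + dx[0])
        (min
          (C.insert y + dy[0])
          (C.substitute x y + dxy[0])) := by
  conv =>
    lhs
    dsimp only [suffixLevenshtein_cons₂]
  simp only [suffixLevenshtein_cons₁]
  rw [impl_cons_fst_zero]
  rfl

@[simp] theorem levenshtein_nil_nil : levenshtein C ([] : List α) ([] : List β) = 0 := by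
  simp [levenshtein, suffixLevenshtein]

@[simp] theorem levenshtein_nil_cons (y : β) (ys : List β) :
    levenshtein C ([] : List α) (y :: ys) = C.insert y + levenshtein C [] ys := by
  have key : ∀ d : {r : List δ // 0 < r.length}, d.1.length = 1 →
      (impl C ([] : List α) y d).1[0]'(impl C [] y d).2 = C.insert y + d.1[0]'d.2 := by
    rintro ⟨l, w⟩ h
    match l, w, h with
    | [a], _, _ => rfl
  exact key _ (suffixLevenshtein_length C [] ys)

@[simp] theorem levenshtein_cons_nil (x : α) (xs : List α) :
    levenshtein C (x :: xs) ([] : List β) = C.delete x + levenshtein C xs [] :=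
  rfl

theorem levenshtein_cons_cons (x : α) (xs : List α) (y : β) (ys : List β) :
    levenshtein C (x :: xs) (y :: ys) =
      min (C.delete x + levenshtein C xs (y :: ys))
        (min (C.insert y + levenshtein C (x :: xs) ys)
          (C.substitute x y + levenshtein C xs ys)) :=
  suffixLevenshtein_cons_cons_fst_get_zero ..

end LevLemmas

namespace LcsAux
open List

set_option linter.unusedSectionVars false

variable {α : Type*} [DecidableEq α]

@[simp] lemma lcsCost_delete (a : α) : (lcsCost : Levenshtein.Cost α α ℕ).delete a = 1 := rfl
@[simp] lemma lcsCost_insert (a : α) : (lcsCost : Levenshtein.Cost α α ℕ).insert a = 1 := rfl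
@[simp] lemma lcsCost_substitute (a b : α) :
    (lcsCost : Levenshtein.Cost α α ℕ).substitute a b = if a = b then 0 else 2 := rfl

lemma wpow_succ (u : List α) (k : ℕ) : wpow u (k+1) = u ++ wpow u k := by
  simp [wpow, List.replicate_succ]

lemma wpow_zero (u : List α) : wpow u 0 = [] := rfl

lemma wpow_length (u : List α) (k : ℕ) : (wpow u k).length = k * u.length := by
  induction k with
  | zero => simp [wpow_zero]
  | succ k ih => simp [wpow_succ, ih]; ring

lemma lev_nil_left (t : List α) : levenshtein lcsCost ([] : List α) t = t.length := by
  induction t with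
  | nil => simp
  | cons b t ih => simp [ih, Nat.add_comm]

lemma lev_nil_right (s : List α) : levenshtein lcsCost s ([] : List α) = s.length := by
  induction s with
  | nil => simp
  | cons a s ih => simp [ih, Nat.add_comm]

lemma levD (a : α) (s t : List α) :
    levenshtein lcsCost (a :: s) t ≤ 1 + levenshtein lcsCost s t := by
  cases t with
  | nil => simp [lev_nil_right, Nat.add_comm]
  | cons b t =>
    rw [levenshtein_cons_cons]
    exact le_trans (min_le_left _ _) (by simp)

lemma levI (s : List α) (b : α) (t : List α) :
    levenshtein lcsCost s (b :: t) ≤ 1 + levenshtein lcsCost s t := by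
  cases s with
  | nil => simp [lev_nil_left, Nat.add_comm]
  | cons a s =>
    rw [levenshtein_cons_cons]
    exact le_trans (min_le_right _ _) (le_trans (min_le_left _ _) (by simp))

lemma levS (a : α) (s t : List α) :
    levenshtein lcsCost (a :: s) (a :: t) ≤ levenshtein lcsCost s t := by
  rw [levenshtein_cons_cons]
  exact le_trans (min_le_right _ _) (le_trans (min_le_right _ _) (by simp))

lemma lev_le_lengths (s t : List α) : levenshtein lcsCost s t ≤ s.length + t.length := by
  induction s generalizing t with
  | nil => simp [lev_nil_left]
  | cons a s ih =>
    have h1 := levD a s t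
    have h2 := ih t
    simp only [List.length_cons]
    omega

lemma L1 (s t w : List α) (hws : w <+ s) (hwt : w <+ t) :
    levenshtein lcsCost s t + 2 * w.length ≤ s.length + t.length := by
  induction s generalizing t w with
  | nil =>
    have : w = [] := List.sublist_nil.mp hws
    subst this
    simp [lev_nil_left]
  | cons a s ihs =>
    induction t generalizing w with
    | nil =>
      have : w = [] := List.sublist_nil.mp hwt
      subst this
      simp [lev_nil_right, Nat.add_comm]
    | cons b t iht =>
      cases w with
      | nil =>
        have := lev_le_lengths (a :: s) (b :: t)
        simpa using this
      | cons c w =>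
        cases hws with
        | cons _ h =>
          have h2 := ihs (b :: t) (c :: w) h hwt
          have h1 := levD a s (b :: t)
          simp only [List.length_cons] at *
          omega
        | cons_cons _ h =>
          cases hwt with
          | cons _ h' =>
            have h2 := iht (a :: w) (List.cons_sublist_cons.mpr h) h'
            have h1 := levI (a :: s) b t
            simp only [List.length_cons] at *
            omega
          | cons_cons _ h' =>
            have h2 := ihs t w h h'
            have h1 := levS a s t
            simp only [List.length_cons] at *
            omega

lemma L2 (s t : List α) : ∃ w : List α, w <+ s ∧ w <+ t ∧
    s.length + t.length ≤ levenshtein lcsCost s t + 2 * w.length := by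
  induction s generalizing t with
  | nil =>
    exact ⟨[], List.Sublist.refl _, List.nil_sublist _, by simp [lev_nil_left]⟩
  | cons a s ihs =>
    induction t with
    | nil =>
      exact ⟨[], List.nil_sublist _, List.Sublist.refl _, by simp [lev_nil_right, Nat.add_comm]⟩
    | cons b t iht =>
      have heq : levenshtein lcsCost (a :: s) (b :: t) =
          min (1 + levenshtein lcsCost s (b :: t))
            (min (1 + levenshtein lcsCost (a :: s) t)
              ((if a = b then 0 else 2) + levenshtein lcsCost s t)) := by
        rw [levenshtein_cons_cons]; simp
      rcases min_cases (1 + levenshtein lcsCost s (b :: t))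
          (min (1 + levenshtein lcsCost (a :: s) t)
            ((if a = b then 0 else 2) + levenshtein lcsCost s t)) with ⟨h, _⟩ | ⟨h, _⟩
      · -- delete branch
        obtain ⟨w, hw1, hw2, hw3⟩ := ihs (b :: t)
        have hlev : levenshtein lcsCost (a :: s) (b :: t) =
            1 + levenshtein lcsCost s (b :: t) := by rw [heq, h]
        refine ⟨w, hw1.cons a, hw2, ?_⟩
        simp only [List.length_cons] at *
        omega
      · rcases min_cases (1 + levenshtein lcsCost (a :: s) t)
            ((if a = b then 0 else 2) + levenshtein lcsCost s t) with ⟨h', _⟩ | ⟨h', _⟩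
        · -- insert branch
          obtain ⟨w, hw1, hw2, hw3⟩ := iht
          have hlev : levenshtein lcsCost (a :: s) (b :: t) =
              1 + levenshtein lcsCost (a :: s) t := by rw [heq, h, h']
          refine ⟨w, hw1, hw2.cons b, ?_⟩
          simp only [List.length_cons] at *
          omega
        · -- substitute branch
          obtain ⟨w, hw1, hw2, hw3⟩ := ihs t
          by_cases hab : a = b
          · subst hab
            have hlev : levenshtein lcsCost (a :: s) (a :: t) =
                levenshtein lcsCost s t := by rw [heq, h, h', if_pos rfl]; omega
            refine ⟨a :: w, hw1.cons₂ a, hw2.cons₂ a, ?_⟩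
            simp only [List.length_cons] at *
            omega
          · have hlev : levenshtein lcsCost (a :: s) (b :: t) =
                2 + levenshtein lcsCost s t := by rw [heq, h, h', if_neg hab]
            refine ⟨w, hw1.cons a, hw2.cons b, ?_⟩
            simp only [List.length_cons] at *
            omega

lemma blocks_of_sublist (u : List α) :
    ∀ (k : ℕ) (z : List α), z <+ wpow u k →
      ∃ bs : List (List α), bs.length = k ∧ (∀ b ∈ bs, b <+ u) ∧ z = bs.flatten := by
  intro k
  induction k with
  | zero =>
    intro z hz
    rw [wpow_zero] at hz
    exact ⟨[], rfl, by simp, by simpa using List.sublist_nil.mp hz⟩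
  | succ k ih =>
    intro z hz
    rw [wpow_succ] at hz
    obtain ⟨z1, z2, rfl, h1, h2⟩ := List.sublist_append_iff.mp hz
    obtain ⟨bs, hlen, hall, rfl⟩ := ih z2 h2
    refine ⟨z1 :: bs, by simp [hlen], ?_, by simp⟩
    intro b hb
    rcases List.mem_cons.mp hb with rfl | hb
    · exact h1
    · exact hall b hb

lemma filter_cons_len {γ : Type*} (p : γ → Bool) (a : γ) (l : List γ) :
    (List.filter p (a :: l)).length = (if p a then 1 else 0) + (List.filter p l).length := by
  by_cases h : p a <;> simp [List.filter_cons_of_pos, List.filter_cons_of_neg, h, Nat.add_comm]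

lemma flatten_length_le (u : List α) (L : List (List α)) (h : ∀ b ∈ L, b <+ u) :
    L.flatten.length ≤ L.length * u.length := by
  induction L with
  | nil => simp
  | cons b L ih =>
    have hb := (h b (by simp)).length_le
    have := ih (fun c hc => h c (by simp [hc]))
    simp only [List.flatten_cons, List.length_append, List.length_cons]
    calc b.length + L.flatten.length ≤ u.length + L.length * u.length := by omega
    _ = (L.length + 1) * u.length := by ring

lemma badcount (u : List α) (L : List (List α)) (h : ∀ b ∈ L, b <+ u) :
    L.flatten.length + (L.filter (fun b => !decide (b = u))).length ≤ L.length * u.length := by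
  induction L with
  | nil => simp
  | cons b L ih =>
    have hsub := h b (by simp)
    have hb := hsub.length_le
    have ih' := ih (fun c hc => h c (by simp [hc]))
    have hmul : (L.length + 1) * u.length = L.length * u.length + u.length := by ring
    simp only [List.flatten_cons, List.length_append, List.length_cons, filter_cons_len, hmul]
    by_cases hbu : b = u
    · have hbl : b.length = u.length := by rw [hbu]
      rw [if_neg (by simp [hbu])]
      omega
    · have hblt : b.length < u.length := by
        rcases Nat.lt_or_ge b.length u.length with h' | h'
        · exact h'
        · exact absurd (hsub.eq_of_length (le_antisymm hb h')) hbu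
      rw [if_pos (by simp [hbu])]
      omega

lemma zipbad (u v : List α) :
    ∀ (s t : List (List α)),
      ((s.zip t).filter (fun p => !(decide (p.1 = u) && decide (p.2 = v)))).length ≤
        (s.filter (fun b => !decide (b = u))).length +
          (t.filter (fun b => !decide (b = v))).length := by
  intro s
  induction s with
  | nil => intro t; simp
  | cons a s ih =>
    intro t
    cases t with
    | nil => simp
    | cons b t =>
      have H := ih t
      rw [List.zip_cons_cons, filter_cons_len, filter_cons_len, filter_cons_len]
      by_cases ha : a = u <;> by_cases hb : b = v
      · rw [if_neg (by simp [ha, hb]), if_neg (by simp [ha]), if_neg (by simp [hb])]; omega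
      · rw [if_pos (by simp [hb]), if_neg (by simp [ha]), if_pos (by simp [hb])]; omega
      · rw [if_pos (by simp [ha]), if_pos (by simp [ha]), if_neg (by simp [hb])]; omega
      · rw [if_pos (by simp [ha]), if_pos (by simp [ha]), if_pos (by simp [hb])]; omega

lemma dropWhile_head_false {β : Type*} (p : β → Bool) (l : List β) {c : β} {s : List β}
    (h : l.dropWhile p = c :: s) : p c = false := by
  have hfind := List.find?_not_eq_head?_dropWhile (p := p) (l := l)
  rw [h] at hfind
  simp only [List.head?_cons] at hfind
  have := List.find?_some hfind
  simpa using this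

lemma run_all {β : Type*} (P : β → Prop) [DecidablePred P] (M : ℕ) (l : List β)
    (hall : ∀ x ∈ l, P x) (hlen : M ≤ l.length) :
    ∃ l1 l2 l3 : List β, l = l1 ++ l2 ++ l3 ∧ l2.length = M ∧ ∀ x ∈ l2, P x := by
  refine ⟨[], l.take M, l.drop M, by simp, by simp [hlen], ?_⟩
  intro x hx
  exact hall x ((List.take_sublist M l).mem hx)

lemma run_lemma {β : Type*} (P : β → Prop) [DecidablePred P] (M : ℕ) :
    ∀ (B : ℕ) (l : List β), (l.filter (fun x => ¬ P x)).length ≤ B →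
      (B+1) * M + B ≤ l.length →
      ∃ l1 l2 l3 : List β, l = l1 ++ l2 ++ l3 ∧ l2.length = M ∧ ∀ x ∈ l2, P x := by
  intro B
  induction B with
  | zero =>
    intro l hf hlen
    cases hdw : l.dropWhile (fun x => decide (P x)) with
    | nil =>
      have hl : l.takeWhile (fun x => decide (P x)) = l := by
        have h := List.takeWhile_append_dropWhile (p := fun x => decide (P x)) (l := l)
        rw [hdw, List.append_nil] at h
        exact h
      refine run_all P M l ?_ (by omega)
      intro x hx
      have hx2 : x ∈ l.takeWhile (fun x => decide (P x)) := by rw [hl]; exact hx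
      simpa using List.mem_takeWhile_imp hx2
    | cons c s =>
      exfalso
      have hc : ¬ P c := by simpa using dropWhile_head_false _ l hdw
      have hmem : c ∈ l.filter (fun x => ¬ P x) := by
        refine List.mem_filter.mpr ⟨?_, by simpa using hc⟩
        have : c ∈ l.dropWhile (fun x => decide (P x)) := by rw [hdw]; simp
        exact (List.dropWhile_sublist _).mem this
      have : 0 < (l.filter (fun x => ¬ P x)).length :=
        List.length_pos_iff.mpr (by intro h; rw [h] at hmem; simp at hmem)
      omega
  | succ B ihB =>
    intro l hf hlen
    have hMl : M ≤ (B+1+1) * M := Nat.le_mul_of_pos_left M (by omega)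
    cases hdw : l.dropWhile (fun x => decide (P x)) with
    | nil =>
      have hl : l.takeWhile (fun x => decide (P x)) = l := by
        have h := List.takeWhile_append_dropWhile (p := fun x => decide (P x)) (l := l)
        rw [hdw, List.append_nil] at h
        exact h
      refine run_all P M l ?_ (by omega)
      intro x hx
      have hx2 : x ∈ l.takeWhile (fun x => decide (P x)) := by rw [hl]; exact hx
      simpa using List.mem_takeWhile_imp hx2
    | cons c s =>
      set tw := l.takeWhile (fun x => decide (P x)) with htw
      have hlsplit : l = tw ++ c :: s := by
        rw [htw, ← hdw, List.takeWhile_append_dropWhile]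
      have htwP : ∀ x ∈ tw, P x := by
        intro x hx
        simpa using List.mem_takeWhile_imp hx
      by_cases hM : M ≤ tw.length
      · refine ⟨[], tw.take M, tw.drop M ++ c :: s, ?_, by simp [hM], ?_⟩
        · rw [hlsplit]
          simp only [List.nil_append, ← List.append_assoc, List.take_append_drop]
        · intro x hx
          exact htwP x ((List.take_sublist M tw).mem hx)
      · have hc : ¬ P c := by simpa using dropWhile_head_false _ l hdw
        have hfl : l.filter (fun x => ¬ P x) = c :: s.filter (fun x => ¬ P x) := by
          rw [hlsplit, List.filter_append]
          have h0 : tw.filter (fun x => ¬ P x) = [] := by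
            rw [List.filter_eq_nil_iff]
            intro x hx
            simpa using htwP x hx
          rw [h0, List.filter_cons]
          simp [hc]
        have hfs : (s.filter (fun x => ¬ P x)).length ≤ B := by
          have h1 : (l.filter (fun x => ¬ P x)).length =
              (s.filter (fun x => ¬ P x)).length + 1 := by rw [hfl]; simp
          omega
        have hslen : (B+1) * M + B ≤ s.length := by
          have h1 : l.length = tw.length + 1 + s.length := by rw [hlsplit]; simp; omega
          have h2 : (B+1+1) * M = (B+1) * M + M := by ring
          omega
        obtain ⟨l1, l2, l3, hsplit, hl2, hP2⟩ := ihB s hfs hslen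
        refine ⟨tw ++ c :: l1, l2, l3, ?_, hl2, hP2⟩
        rw [hlsplit, hsplit]
        simp

lemma flatten_all_eq (u : List α) (L : List (List α)) (h : ∀ b ∈ L, b = u) :
    L.flatten = wpow u L.length := by
  induction L with
  | nil => simp [wpow_zero]
  | cons b L ih =>
    have hb : b = u := h b (by simp)
    subst hb
    rw [List.flatten_cons, List.length_cons, wpow_succ,
      ih (fun c hc => h c (by simp [hc]))]
lemma wpow_drop_take (u : List α) (hn : 0 < u.length) :
    ∀ (M r : ℕ), r + u.length ≤ M * u.length →
      ((wpow u M).drop r).take u.length = u.rotate r := by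
  intro M
  induction M with
  | zero =>
    intro r hr
    exfalso
    rw [Nat.zero_mul] at hr
    omega
  | succ M ih =>
    intro r hr
    rcases Nat.lt_or_ge r u.length with hrn | hrn
    · have hdrop : (wpow u (M+1)).drop r = u.drop r ++ wpow u M := by
        rw [wpow_succ, List.drop_append,
          Nat.sub_eq_zero_of_le (le_of_lt hrn), List.drop_zero]
      have htk : (wpow u M).take r = u.take r := by
        rcases Nat.eq_zero_or_pos M with rfl | hM
        · have hr0 : r = 0 := by simp at hr; omega
          simp [hr0, wpow_zero]
        · obtain ⟨M', rfl⟩ : ∃ M', M = M' + 1 := ⟨M - 1, by omega⟩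
          rw [wpow_succ, List.take_append,
            Nat.sub_eq_zero_of_le (le_of_lt hrn), List.take_zero, List.append_nil]
      rw [hdrop, List.take_append,
        List.take_of_length_le (by simp), List.length_drop]
      have h1 : u.length - (u.length - r) = r := by omega
      rw [h1, htk, List.rotate_eq_drop_append_take (le_of_lt hrn)]
    · have hdrop : (wpow u (M+1)).drop r = (wpow u M).drop (r - u.length) := by
        rw [wpow_succ, List.drop_append,
          List.drop_eq_nil_of_le hrn, List.nil_append]
      have hr' : (r - u.length) + u.length ≤ M * u.length := by
        have hmul : (M + 1) * u.length = M * u.length + u.length := by ring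
        omega
      rw [hdrop, ih (r - u.length) hr']
      have hrot : u.rotate r = u.rotate (u.length + (r - u.length)) := by
        congr 1
        omega
      rw [hrot, ← List.rotate_rotate, List.rotate_length]

lemma overlap (u v : List α) (C M : ℕ) (hv : v.length = u.length) (hn : 0 < u.length)
    (F1 F3 G1 G3 : List α) (heq : F1 ++ (wpow u M ++ F3) = G1 ++ (wpow v M ++ G3))
    (h1 : F1.length ≤ G1.length) (h2 : G1.length ≤ F1.length + C)
    (hM : C + 1 ≤ M) : ∃ r, u.rotate r = v := by
  set r := G1.length - F1.length with hrdef
  have hrC : r ≤ C := by omega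
  have hrn : r + u.length ≤ M * u.length := by
    have ha : (C + 1) * u.length ≤ M * u.length := Nat.mul_le_mul hM (le_refl u.length)
    have hb : (C + 1) * u.length = C * u.length + u.length := by ring
    have hc : r ≤ C * u.length := le_trans hrC (Nat.le_mul_of_pos_right C hn)
    omega
  have hM1 : 1 ≤ M := by omega
  have hv1 : ((G1 ++ (wpow v M ++ G3)).drop G1.length).take u.length = v := by
    rw [List.drop_left]
    obtain ⟨M', rfl⟩ : ∃ M', M = M' + 1 := ⟨M - 1, by omega⟩
    rw [wpow_succ, List.append_assoc, List.take_append,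
      List.take_of_length_le (by omega), Nat.sub_eq_zero_of_le (by omega)]
    simp
  have hv2 : ((F1 ++ (wpow u M ++ F3)).drop G1.length).take u.length = u.rotate r := by
    rw [List.drop_append, List.drop_eq_nil_of_le h1, List.nil_append,
      ← hrdef, List.drop_append,
      Nat.sub_eq_zero_of_le (by rw [wpow_length]; omega), List.drop_zero,
      List.take_append]
    have hlen : u.length ≤ ((wpow u M).drop r).length := by
      rw [List.length_drop, wpow_length]
      omega
    rw [Nat.sub_eq_zero_of_le hlen, List.take_zero, List.append_nil]
    exact wpow_drop_take u hn M r hrn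
  rw [heq] at hv2
  exact ⟨r, hv2.symm.trans hv1⟩

lemma core (u v : List α) (C k : ℕ) (hv : v.length = u.length) (hn : 0 < u.length)
    (z : List α) (hzu : z <+ wpow u k) (hzv : z <+ wpow v k)
    (hz : k * u.length ≤ z.length + C)
    (hk : (2*C+1) * (C+2) + 2*C ≤ k) : u.IsRotated v := by
  set M := C + 2 with hMdef
  obtain ⟨bs, hbslen, hbsall, hbsz⟩ := blocks_of_sublist u k z hzu
  obtain ⟨cs, hcslen, hcsall, hcsz⟩ := blocks_of_sublist v k z hzv
  have hbadu : (bs.filter (fun b => !decide (b = u))).length ≤ C := by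
    have h1 := badcount u bs hbsall
    rw [← hbsz, hbslen] at h1
    omega
  have hbadv : (cs.filter (fun b => !decide (b = v))).length ≤ C := by
    have h1 := badcount v cs hcsall
    rw [← hcsz, hcslen, hv] at h1
    omega
  have hzipbad : ((bs.zip cs).filter
      (fun p => !(decide (p.1 = u) && decide (p.2 = v)))).length ≤ 2*C := by
    have h1 := zipbad u v bs cs
    omega
  have hziplen : (bs.zip cs).length = k := by
    rw [List.length_zip, hbslen, hcslen]
    simp
  have hfilter_eq : ((bs.zip cs).filter (fun p => decide ¬(p.1 = u ∧ p.2 = v))) =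
      ((bs.zip cs).filter (fun p => !(decide (p.1 = u) && decide (p.2 = v)))) :=
    List.filter_congr (fun p _ => by
      by_cases h1 : p.1 = u <;> by_cases h2 : p.2 = v <;> simp [h1, h2])
  obtain ⟨l1, l2, l3, hsplit, hl2len, hl2P⟩ :=
    run_lemma (fun p : List α × List α => p.1 = u ∧ p.2 = v) M (2*C) (bs.zip cs)
      (by rw [show (fun p : List α × List α => decide ¬(p.1 = u ∧ p.2 = v)) =
          (fun p : List α × List α => decide ¬(p.1 = u ∧ p.2 = v)) from rfl, hfilter_eq]
          exact hzipbad)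
      (by rw [hziplen]; omega)
  have hbs_eq : bs = l1.map Prod.fst ++ l2.map Prod.fst ++ l3.map Prod.fst := by
    rw [← List.map_append, ← List.map_append, ← hsplit,
      List.map_fst_zip (by rw [hbslen, hcslen])]
  have hcs_eq : cs = l1.map Prod.snd ++ l2.map Prod.snd ++ l3.map Prod.snd := by
    rw [← List.map_append, ← List.map_append, ← hsplit,
      List.map_snd_zip (by rw [hbslen, hcslen])]
  have hmid_u : (l2.map Prod.fst).flatten = wpow u M := by
    rw [flatten_all_eq u _ (fun b hb => ?_), List.length_map, hl2len]
    obtain ⟨p, hp, rfl⟩ := List.mem_map.mp hb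
    exact (hl2P p hp).1
  have hmid_v : (l2.map Prod.snd).flatten = wpow v M := by
    rw [flatten_all_eq v _ (fun b hb => ?_), List.length_map, hl2len]
    obtain ⟨p, hp, rfl⟩ := List.mem_map.mp hb
    exact (hl2P p hp).2
  set F1 := (l1.map Prod.fst).flatten with hF1def
  set F3 := (l3.map Prod.fst).flatten with hF3def
  set G1 := (l1.map Prod.snd).flatten with hG1def
  set G3 := (l3.map Prod.snd).flatten with hG3def
  have hzsplit_u : z = F1 ++ (wpow u M ++ F3) := by
    rw [hbsz, hbs_eq, List.flatten_append, List.flatten_append, hmid_u, List.append_assoc]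
  have hzsplit_v : z = G1 ++ (wpow v M ++ G3) := by
    rw [hcsz, hcs_eq, List.flatten_append, List.flatten_append, hmid_v, List.append_assoc]
  have hklen : l1.length + M + l3.length = k := by
    have h1 := congrArg List.length hsplit
    rw [hziplen] at h1
    simp only [List.length_append, hl2len] at h1
    omega
  have hmemu : ∀ b ∈ l1.map Prod.fst, b <+ u := fun b hb =>
    hbsall b (by rw [hbs_eq]; exact List.mem_append.mpr (Or.inl (List.mem_append.mpr (Or.inl hb))))
  have hmemu3 : ∀ b ∈ l3.map Prod.fst, b <+ u := fun b hb =>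
    hbsall b (by rw [hbs_eq]; exact List.mem_append.mpr (Or.inr hb))
  have hmemv : ∀ b ∈ l1.map Prod.snd, b <+ v := fun b hb =>
    hcsall b (by rw [hcs_eq]; exact List.mem_append.mpr (Or.inl (List.mem_append.mpr (Or.inl hb))))
  have hmemv3 : ∀ b ∈ l3.map Prod.snd, b <+ v := fun b hb =>
    hcsall b (by rw [hcs_eq]; exact List.mem_append.mpr (Or.inr hb))
  have hF1le : F1.length ≤ l1.length * u.length := by
    have h := flatten_length_le u _ hmemu
    rwa [List.length_map] at h
  have hF3le : F3.length ≤ l3.length * u.length := by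
    have h := flatten_length_le u _ hmemu3
    rwa [List.length_map] at h
  have hG1le : G1.length ≤ l1.length * u.length := by
    have h := flatten_length_le v _ hmemv
    rwa [List.length_map, hv] at h
  have hG3le : G3.length ≤ l3.length * u.length := by
    have h := flatten_length_le v _ hmemv3
    rwa [List.length_map, hv] at h
  have hzlen_u : z.length = F1.length + M * u.length + F3.length := by
    rw [hzsplit_u]
    simp only [List.length_append, wpow_length]
    omega
  have hzlen_v : z.length = G1.length + M * u.length + G3.length := by
    rw [hzsplit_v]
    simp only [List.length_append, wpow_length, hv]
    omega
  have hk_n : k * u.length = l1.length * u.length + M * u.length + l3.length * u.length := by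
    rw [← hklen]
    ring
  have hF1ge : l1.length * u.length ≤ F1.length + C := by omega
  have hG1ge : l1.length * u.length ≤ G1.length + C := by omega
  rcases le_total F1.length G1.length with hle | hle
  · obtain ⟨r, hr⟩ := overlap u v C M hv hn F1 F3 G1 G3
      (by rw [← hzsplit_u, ← hzsplit_v]) hle (by omega) (by omega)
    exact ⟨r, hr⟩
  · obtain ⟨r, hr⟩ := overlap v u C M hv.symm (by omega) G1 G3 F1 F3
      (by rw [← hzsplit_v, ← hzsplit_u]) hle (by omega) (by omega)
    exact (List.IsRotated.symm ⟨r, hr⟩)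
lemma slice_sublist (a m c : List α) (j e : ℕ) (hj : a.length ≤ j)
    (he : e ≤ a.length + m.length) :
    (((a ++ (m ++ c)).take e).drop j) <+ m := by
  rcases le_or_gt e j with hej | hej
  · have : ((a ++ (m ++ c)).take e).drop j = [] := by
      apply List.drop_eq_nil_of_le
      rw [List.length_take]
      omega
    rw [this]
    exact List.nil_sublist m
  · have hae : a.length ≤ e := by omega
    have htk : (a ++ (m ++ c)).take e = a ++ m.take (e - a.length) := by
      rw [List.take_append, List.take_of_length_le hae,
        List.take_append,
        Nat.sub_eq_zero_of_le (by omega : e - a.length ≤ m.length), List.take_zero,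
        List.append_nil]
    rw [htk, List.drop_append, List.drop_eq_nil_of_le hj, List.nil_append]
    exact ((List.drop_sublist _ _).trans (List.take_sublist _ _))

lemma wpow_append_comm (p q : List α) (k : ℕ) :
    wpow (p ++ q) k ++ p = p ++ wpow (q ++ p) k := by
  induction k with
  | zero => simp [wpow_zero]
  | succ k ih =>
    rw [wpow_succ, wpow_succ]
    calc (p ++ q) ++ wpow (p ++ q) k ++ p = (p ++ q) ++ (wpow (p ++ q) k ++ p) := by
          simp [List.append_assoc]
    _ = (p ++ q) ++ (p ++ wpow (q ++ p) k) := by rw [ih]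
    _ = p ++ ((q ++ p) ++ wpow (q ++ p) k) := by simp [List.append_assoc]

lemma wpow_succ_right (u : List α) (k : ℕ) : wpow u (k+1) = wpow u k ++ u := by
  induction k with
  | zero => simp [wpow_zero, wpow_succ]
  | succ k ih =>
    calc wpow u (k+1+1) = u ++ wpow u (k+1) := wpow_succ u (k+1)
    _ = u ++ (wpow u k ++ u) := by rw [ih]
    _ = (u ++ wpow u k) ++ u := by rw [List.append_assoc]
    _ = wpow u (k+1) ++ u := by rw [wpow_succ]

lemma wpow_conj (p q : List α) (k : ℕ) :
    wpow (p ++ q) (k + 1) = p ++ (wpow (q ++ p) k ++ q) := by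
  rw [wpow_succ_right]
  have h := wpow_append_comm p q k
  calc wpow (p ++ q) k ++ (p ++ q) = (wpow (p ++ q) k ++ p) ++ q := by
        simp [List.append_assoc]
  _ = (p ++ wpow (q ++ p) k) ++ q := by rw [h]
  _ = p ++ (wpow (q ++ p) k ++ q) := by simp [List.append_assoc]
end LcsAux

open LcsAux List in
theorem stmt_4 {α : Type*} [DecidableEq α] (x y x' y' u v : List α) :
    List.IsRotated u v ↔
      ∃ (C : ℕ) (I : Set ℕ), I.Infinite ∧ ∀ k ∈ I,
        levenshtein lcsCost (x ++ wpow u k ++ y) (x' ++ wpow v k ++ y') ≤ C := by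
  constructor
  · intro hrot
    obtain ⟨p, q, hu, hv⟩ : ∃ p q : List α, u = p ++ q ∧ v = q ++ p := by
      obtain ⟨m, hm⟩ := hrot
      rcases Nat.eq_zero_or_pos u.length with h0 | h0
      · have hu0 : u = [] := List.length_eq_zero_iff.mp h0
        refine ⟨[], [], by simp [hu0], ?_⟩
        rw [← hm, hu0]
        simp
      · have hilt : m % u.length ≤ u.length := le_of_lt (Nat.mod_lt m h0)
        refine ⟨u.take (m % u.length), u.drop (m % u.length),
          (List.take_append_drop _ u).symm, ?_⟩
        rw [← hm, ← List.rotate_mod, List.rotate_eq_drop_append_take hilt]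
    subst hu hv
    refine ⟨x.length + y.length + x'.length + y'.length + 2 * (p.length + q.length),
      Set.Ici 1, Set.Ici_infinite 1, ?_⟩
    intro k hk
    have hk1 : 1 ≤ k := hk
    obtain ⟨j, rfl⟩ : ∃ j, k = j + 1 := ⟨k - 1, by omega⟩
    have hsu : x ++ wpow (p ++ q) (j+1) ++ y =
        (x ++ p) ++ (wpow (q ++ p) j ++ (q ++ y)) := by
      rw [wpow_conj]
      simp [List.append_assoc]
    have hsv : x' ++ wpow (q ++ p) (j+1) ++ y' =
        (x' ++ (q ++ p)) ++ (wpow (q ++ p) j ++ y') := by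
      rw [wpow_succ]
      simp [List.append_assoc]
    have hms : wpow (q ++ p) j <+ x ++ wpow (p ++ q) (j+1) ++ y := by
      rw [hsu]
      exact (List.sublist_append_left _ _).trans (List.sublist_append_right _ _)
    have hmt : wpow (q ++ p) j <+ x' ++ wpow (q ++ p) (j+1) ++ y' := by
      rw [hsv]
      exact (List.sublist_append_left _ _).trans (List.sublist_append_right _ _)
    have h := L1 _ _ _ hms hmt
    have hml : (wpow (q ++ p) j).length = j * (q.length + p.length) := by
      rw [wpow_length]
      simp
    have hsl : (x ++ wpow (p ++ q) (j+1) ++ y).length =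
        x.length + ((j+1) * (p.length + q.length)) + y.length := by
      simp [wpow_length]
      omega
    have htl : (x' ++ wpow (q ++ p) (j+1) ++ y').length =
        x'.length + ((j+1) * (q.length + p.length)) + y'.length := by
      simp [wpow_length]
      omega
    have hexp1 : (j+1) * (p.length + q.length) = j * (q.length + p.length)
        + (p.length + q.length) := by ring
    have hexp2 : (j+1) * (q.length + p.length) = j * (q.length + p.length)
        + (p.length + q.length) := by ring
    omega
  · rintro ⟨C, I, hI, hd⟩
    have hlen : v.length = u.length := by
      by_contra hne
      obtain ⟨k, hkI, hk⟩ := hI.exists_gt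
        (C + x.length + y.length + x'.length + y'.length + 1)
      obtain ⟨w, hw1, hw2, hw3⟩ := L2 (x ++ wpow u k ++ y) (x' ++ wpow v k ++ y')
      have hwle1 := hw1.length_le
      have hwle2 := hw2.length_le
      have hdk := hd k hkI
      simp only [List.length_append, wpow_length] at hw3 hwle1 hwle2
      rcases Nat.lt_or_ge u.length v.length with hlt | hge
      · have hmul : k * (u.length + 1) ≤ k * v.length := Nat.mul_le_mul (le_refl k) hlt
        have hexp : k * (u.length + 1) = k * u.length + k := by ring
        omega
      · have hlt' : v.length + 1 ≤ u.length := by omega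
        have hmul : k * (v.length + 1) ≤ k * u.length := Nat.mul_le_mul (le_refl k) hlt'
        have hexp : k * (v.length + 1) = k * v.length + k := by ring
        omega
    rcases Nat.eq_zero_or_pos u.length with h0 | h0
    · have hu0 : u = [] := List.length_eq_zero_iff.mp h0
      have hv0 : v = [] := List.length_eq_zero_iff.mp (by omega)
      rw [hu0, hv0]
    · set C2 := C + (x.length + y.length + x'.length + y'.length) with hC2
      obtain ⟨k, hkI, hk⟩ := hI.exists_gt ((2*C2+1) * (C2+2) + 2*C2)
      obtain ⟨w, hw1, hw2, hw3⟩ := L2 (x ++ wpow u k ++ y) (x' ++ wpow v k ++ y')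
      have hdk := hd k hkI
      obtain ⟨w1, a2, rfl, hw1x, ha2⟩ := List.sublist_append_iff.mp hw1
      obtain ⟨a1, mu, rfl, ha1, hmu⟩ := List.sublist_append_iff.mp hw1x
      obtain ⟨w2, b2, heq2, hw2x, hb2⟩ := List.sublist_append_iff.mp hw2
      obtain ⟨b1, mv, heq3, hb1, hmv⟩ := List.sublist_append_iff.mp hw2x
      set W := (a1 ++ mu) ++ a2 with hW
      set j := max a1.length b1.length with hj
      set e := min (a1.length + mu.length) (b1.length + mv.length) with he
      set z := (W.take e).drop j with hz
      have hWv : W = b1 ++ (mv ++ b2) := by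
        rw [heq2, heq3, List.append_assoc]
      have hWu : W = a1 ++ (mu ++ a2) := by
        rw [hW, List.append_assoc]
      have hzu : z <+ wpow u k := by
        have h1 : z <+ mu := by
          rw [hz, hWu]
          exact slice_sublist a1 mu a2 j e (le_max_left _ _) (min_le_left _ _)
        exact h1.trans hmu
      have hzv : z <+ wpow v k := by
        have h1 : z <+ mv := by
          rw [hz, hWv]
          exact slice_sublist b1 mv b2 j e (le_max_right _ _) (min_le_right _ _)
        exact h1.trans hmv
      have hWlen1 : W.length = a1.length + mu.length + a2.length := by
        rw [hW]
        simp
        omega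
      have hWlen2 : W.length = b1.length + mv.length + b2.length := by
        rw [hWv]
        simp
        omega
      have hzlen : z.length = min e W.length - j := by
        rw [hz]
        simp [List.length_drop, List.length_take]
      have ha1l : a1.length ≤ x.length := ha1.length_le
      have ha2l : a2.length ≤ y.length := ha2.length_le
      have hb1l : b1.length ≤ x'.length := hb1.length_le
      have hb2l : b2.length ≤ y'.length := hb2.length_le
      simp only [List.length_append, wpow_length, hlen] at hw3
      have hcore : k * u.length ≤ z.length + C2 := by omega
      exact core u v C2 k hlen h0 z hzu hzv hcore (by omega)
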